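/- Let (H,R) be a braided bialgebra over a field k, let θ ∈ H be an invertible central element satisfying Δ(θ) = (R·R_21)^{-1}·(θ⊗θ), and let f : H → k be a character. Then the element K = (f⊗id)((1⊗θ^{-1})·R·R_21) ∈ H satisfies Δ(K) = (K⊗1)·R·(1⊗K)·R_21 in H⊗H. -/

import Mathlib

/- Braided bialgebras: basic tensor-leg maps and the universal R-matrix axioms. -/

open scoped TensorProduct

noncomputable section

variable (k H : Type*) [Field k] [Ring H] [Bialgebra k H]

/-- The flip `a ⊗ b ↦ b ⊗ a` on `H ⊗[k] H`, as an algebra homomorphism. -/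
def tflip : H ⊗[k] H →ₐ[k] H ⊗[k] H := (Algebra.TensorProduct.comm k H H).toAlgHom

/-- `s ⊗ t ↦ s ⊗ t ⊗ 1 : H ⊗ H → H ⊗ H ⊗ H`. -/
def leg12 : H ⊗[k] H →ₐ[k] H ⊗[k] (H ⊗[k] H) :=
  Algebra.TensorProduct.map (AlgHom.id k H) Algebra.TensorProduct.includeLeft

/-- `s ⊗ t ↦ s ⊗ 1 ⊗ t : H ⊗ H → H ⊗ H ⊗ H`. -/
def leg13 : H ⊗[k] H →ₐ[k] H ⊗[k] (H ⊗[k] H) :=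
  Algebra.TensorProduct.map (AlgHom.id k H) Algebra.TensorProduct.includeRight

/-- `s ⊗ t ↦ 1 ⊗ s ⊗ t : H ⊗ H → H ⊗ H ⊗ H`. -/
def leg23 : H ⊗[k] H →ₐ[k] H ⊗[k] (H ⊗[k] H) :=
  Algebra.TensorProduct.includeRight

/-- `Δ ⊗ id : H ⊗ H → H ⊗ H ⊗ H`. -/
def comulLeft : H ⊗[k] H →ₐ[k] H ⊗[k] (H ⊗[k] H) :=
  (Algebra.TensorProduct.assoc k k k H H H).toAlgHom.comp
    (Algebra.TensorProduct.map (Bialgebra.comulAlgHom k H) (AlgHom.id k H))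

/-- `id ⊗ Δ : H ⊗ H → H ⊗ H ⊗ H`. -/
def comulRight : H ⊗[k] H →ₐ[k] H ⊗[k] (H ⊗[k] H) :=
  Algebra.TensorProduct.map (AlgHom.id k H) (Bialgebra.comulAlgHom k H)

/-- `(H, R)` is a braided bialgebra with `R⁻¹ = Rinv`:  `R` is an invertible element of
`H ⊗ H` satisfying `Δ(x) · R = R · Δ^op(x)` for all `x` and the two hexagon identities
`(Δ ⊗ id)(R) = R₂₃ · R₁₃` and `(id ⊗ Δ)(R) = R₁₂ · R₁₃`. -/
def IsUniversalRMatrix (R Rinv : H ⊗[k] H) : Prop :=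
  R * Rinv = 1 ∧ Rinv * R = 1 ∧
  (∀ x : H, Bialgebra.comulAlgHom k H x * R = R * tflip k H (Bialgebra.comulAlgHom k H x)) ∧
  comulLeft k H R = leg23 k H R * leg13 k H R ∧
  comulRight k H R = leg12 k H R * leg13 k H R

/-- `ψ ⊗ id : H ⊗ H → H`, `a ⊗ b ↦ ψ(a) • b`. -/
def dualTensorId (ψ : H →ₗ[k] k) : H ⊗[k] H →ₗ[k] H :=
  (TensorProduct.lid k H).toLinearMap.comp (TensorProduct.map ψ LinearMap.id)

def tau23 : H ⊗[k] (H ⊗[k] H) →ₐ[k] H ⊗[k] (H ⊗[k] H) :=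
  Algebra.TensorProduct.map (AlgHom.id k H) (tflip k H)

def tau12 : H ⊗[k] (H ⊗[k] H) →ₐ[k] H ⊗[k] (H ⊗[k] H) :=
  ((Algebra.TensorProduct.assoc k k k H H H).toAlgHom.comp
    (Algebra.TensorProduct.map (tflip k H) (AlgHom.id k H))).comp
      (Algebra.TensorProduct.assoc k k k H H H).symm.toAlgHom

def cyc : H ⊗[k] (H ⊗[k] H) →ₐ[k] H ⊗[k] (H ⊗[k] H) :=
  (Algebra.TensorProduct.comm k (H ⊗[k] H) H).toAlgHom.comp
    (Algebra.TensorProduct.assoc k k k H H H).symm.toAlgHom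

section AuxDKM
variable {k H}

@[simp] lemma tflip_tmul (a b : H) : tflip k H (a ⊗ₜ[k] b) = b ⊗ₜ[k] a := rfl

@[simp] lemma leg12_tmul (a b : H) :
    leg12 k H (a ⊗ₜ[k] b) = a ⊗ₜ[k] (b ⊗ₜ[k] (1 : H)) := rfl

@[simp] lemma leg13_tmul (a b : H) :
    leg13 k H (a ⊗ₜ[k] b) = a ⊗ₜ[k] ((1 : H) ⊗ₜ[k] b) := rfl

@[simp] lemma leg23_apply (x : H ⊗[k] H) : leg23 k H x = (1 : H) ⊗ₜ[k] x := rfl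

@[simp] lemma tau23_tmul (a b c : H) :
    tau23 k H (a ⊗ₜ[k] (b ⊗ₜ[k] c)) = a ⊗ₜ[k] (c ⊗ₜ[k] b) := rfl

@[simp] lemma tau12_tmul (a b c : H) :
    tau12 k H (a ⊗ₜ[k] (b ⊗ₜ[k] c)) = b ⊗ₜ[k] (a ⊗ₜ[k] c) := by
  simp [tau12, tflip]

@[simp] lemma cyc_tmul (a b c : H) :
    cyc k H (a ⊗ₜ[k] (b ⊗ₜ[k] c)) = c ⊗ₜ[k] (a ⊗ₜ[k] b) := by
  simp [cyc]

lemma tau23_leg12 (x : H ⊗[k] H) : tau23 k H (leg12 k H x) = leg13 k H x := by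
  induction x using TensorProduct.induction_on with
  | zero => simp
  | tmul a b => simp
  | add x y hx hy => simp only [map_add, hx, hy]

lemma tau23_leg13 (x : H ⊗[k] H) : tau23 k H (leg13 k H x) = leg12 k H x := by
  induction x using TensorProduct.induction_on with
  | zero => simp
  | tmul a b => simp
  | add x y hx hy => simp only [map_add, hx, hy]

lemma tau23_leg23 (x : H ⊗[k] H) : tau23 k H (leg23 k H x) = leg23 k H (tflip k H x) := by
  induction x using TensorProduct.induction_on with
  | zero => simp
  | tmul a b => simp
  | add x y hx hy => simp only [map_add, hx, hy]

lemma tau12_leg12 (x : H ⊗[k] H) : tau12 k H (leg12 k H x) = leg12 k H (tflip k H x) := by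
  induction x using TensorProduct.induction_on with
  | zero => simp
  | tmul a b => simp
  | add x y hx hy => simp only [map_add, hx, hy]

lemma tau12_leg13 (x : H ⊗[k] H) : tau12 k H (leg13 k H x) = leg23 k H x := by
  induction x using TensorProduct.induction_on with
  | zero => simp
  | tmul a b => simp
  | add x y hx hy => simp only [map_add, hx, hy]

lemma tau12_leg23 (x : H ⊗[k] H) : tau12 k H (leg23 k H x) = leg13 k H x := by
  induction x using TensorProduct.induction_on with
  | zero => simp
  | tmul a b => simp
  | add x y hx hy => simp only [map_add, hx, hy]

lemma cyc_leg23 (x : H ⊗[k] H) : cyc k H (leg23 k H x) = leg13 k H (tflip k H x) := by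
  induction x using TensorProduct.induction_on with
  | zero => simp
  | tmul a b => simp
  | add x y hx hy => simp only [map_add, hx, hy]

lemma cyc_leg13 (x : H ⊗[k] H) : cyc k H (leg13 k H x) = leg12 k H (tflip k H x) := by
  induction x using TensorProduct.induction_on with
  | zero => simp
  | tmul a b => simp
  | add x y hx hy => simp only [map_add, hx, hy]

lemma central_tmul_one {A B : Type*} [Ring A] [Ring B] [Algebra k A] [Algebra k B]
    (z : A) (hz : ∀ x, z * x = x * z) (w : A ⊗[k] B) :
    (z ⊗ₜ[k] (1 : B)) * w = w * (z ⊗ₜ[k] (1 : B)) := by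
  induction w using TensorProduct.induction_on with
  | zero => simp
  | tmul a b => simp [Algebra.TensorProduct.tmul_mul_tmul, hz a]
  | add x y hx hy => simp only [mul_add, add_mul, hx, hy]

lemma central_one_tmul {A B : Type*} [Ring A] [Ring B] [Algebra k A] [Algebra k B]
    (z : B) (hz : ∀ x, z * x = x * z) (w : A ⊗[k] B) :
    ((1 : A) ⊗ₜ[k] z) * w = w * ((1 : A) ⊗ₜ[k] z) := by
  induction w using TensorProduct.induction_on with
  | zero => simp
  | tmul a b => simp [Algebra.TensorProduct.tmul_mul_tmul, hz b]
  | add x y hx hy => simp only [mul_add, add_mul, hx, hy]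

lemma leg12_comm_thirdleg (x : H ⊗[k] H) (b : H) :
    leg12 k H x * ((1 : H) ⊗ₜ[k] ((1 : H) ⊗ₜ[k] b))
      = ((1 : H) ⊗ₜ[k] ((1 : H) ⊗ₜ[k] b)) * leg12 k H x := by
  induction x using TensorProduct.induction_on with
  | zero => simp
  | tmul a c => simp [Algebra.TensorProduct.tmul_mul_tmul]
  | add x y hx hy => simp only [map_add, mul_add, add_mul, hx, hy]

lemma assoc_tmul_right (y : H ⊗[k] H) (b : H) :
    (Algebra.TensorProduct.assoc k k k H H H) (y ⊗ₜ[k] b)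
      = leg12 k H y * ((1 : H) ⊗ₜ[k] ((1 : H) ⊗ₜ[k] b)) := by
  induction y using TensorProduct.induction_on with
  | zero => simp
  | tmul c d => simp [Algebra.TensorProduct.tmul_mul_tmul]
  | add x y hx hy => simp only [TensorProduct.add_tmul, map_add, add_mul, hx, hy]

lemma cyc_comulLeft (x : H ⊗[k] H) :
    cyc k H (comulLeft k H x) = comulRight k H (tflip k H x) := by
  induction x using TensorProduct.induction_on with
  | zero => simp
  | tmul a b =>
      have inner : ∀ y : H ⊗[k] H,
          cyc k H ((Algebra.TensorProduct.assoc k k k H H H) (y ⊗ₜ[k] b)) = b ⊗ₜ[k] y := by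
        intro y
        induction y using TensorProduct.induction_on with
        | zero => simp
        | tmul c d => simp
        | add x y hx hy => simp only [TensorProduct.add_tmul, map_add, hx, hy,
            TensorProduct.tmul_add]
      show cyc k H ((Algebra.TensorProduct.assoc k k k H H H)
        ((Bialgebra.comulAlgHom k H a) ⊗ₜ[k] b)) = _
      rw [inner]
      rfl
  | add x y hx hy => simp only [map_add, hx, hy]

lemma tau12_assoc_tmul (y : H ⊗[k] H) (b : H) :
    tau12 k H ((Algebra.TensorProduct.assoc k k k H H H) (y ⊗ₜ[k] b))
      = (Algebra.TensorProduct.assoc k k k H H H) ((tflip k H y) ⊗ₜ[k] b) := by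
  induction y using TensorProduct.induction_on with
  | zero => simp
  | tmul c d => simp
  | add x y hx hy => simp only [TensorProduct.add_tmul, map_add, hx, hy]

lemma intertwine (R : H ⊗[k] H)
    (hint : ∀ x : H, Bialgebra.comulAlgHom k H x * R
      = R * tflip k H (Bialgebra.comulAlgHom k H x)) (x : H ⊗[k] H) :
    comulLeft k H x * leg12 k H R = leg12 k H R * tau12 k H (comulLeft k H x) := by
  induction x using TensorProduct.induction_on with
  | zero => simp
  | tmul a b =>
      have h1 : comulLeft k H (a ⊗ₜ[k] b)
          = (Algebra.TensorProduct.assoc k k k H H H)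
              ((Bialgebra.comulAlgHom k H a) ⊗ₜ[k] b) := rfl
      rw [h1, tau12_assoc_tmul, assoc_tmul_right, assoc_tmul_right,
        mul_assoc, ← leg12_comm_thirdleg, ← mul_assoc, ← map_mul, hint a,
        map_mul, mul_assoc]
  | add x y hx hy => simp only [map_add, add_mul, mul_add, hx, hy]

variable (k H) in
def piMap (f : H →ₐ[k] k) : H ⊗[k] (H ⊗[k] H) →ₐ[k] H ⊗[k] H :=
  (Algebra.TensorProduct.lid k (H ⊗[k] H)).toAlgHom.comp
    (Algebra.TensorProduct.map f (AlgHom.id k (H ⊗[k] H)))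

@[simp] lemma piMap_tmul (f : H →ₐ[k] k) (a : H) (m : H ⊗[k] H) :
    piMap k H f (a ⊗ₜ[k] m) = f a • m := by
  simp [piMap]

@[simp] lemma dualTensorId_tmul (ψ : H →ₗ[k] k) (a b : H) :
    dualTensorId k H ψ (a ⊗ₜ[k] b) = ψ a • b := by
  simp [dualTensorId]

lemma piMap_leg12 (f : H →ₐ[k] k) (x : H ⊗[k] H) :
    piMap k H f (leg12 k H x) = (dualTensorId k H f.toLinearMap x) ⊗ₜ[k] (1 : H) := by
  induction x using TensorProduct.induction_on with
  | zero => simp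
  | tmul a b => simp [TensorProduct.smul_tmul']
  | add x y hx hy => simp only [map_add, hx, hy, TensorProduct.add_tmul]

lemma piMap_leg13 (f : H →ₐ[k] k) (x : H ⊗[k] H) :
    piMap k H f (leg13 k H x) = (1 : H) ⊗ₜ[k] (dualTensorId k H f.toLinearMap x) := by
  induction x using TensorProduct.induction_on with
  | zero => simp
  | tmul a b => simp [TensorProduct.tmul_smul]
  | add x y hx hy => simp only [map_add, hx, hy, TensorProduct.tmul_add]

lemma piMap_leg23 (f : H →ₐ[k] k) (x : H ⊗[k] H) :
    piMap k H f (leg23 k H x) = x := by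
  simp

lemma piMap_comulRight (f : H →ₐ[k] k) (x : H ⊗[k] H) :
    piMap k H f (comulRight k H x)
      = Bialgebra.comulAlgHom k H (dualTensorId k H f.toLinearMap x) := by
  induction x using TensorProduct.induction_on with
  | zero => simp
  | tmul a b =>
      have : comulRight k H (a ⊗ₜ[k] b) = a ⊗ₜ[k] (Bialgebra.comulAlgHom k H b) := rfl
      rw [this, piMap_tmul, dualTensorId_tmul, map_smul]; rfl
  | add x y hx hy => simp only [map_add, hx, hy]

lemma chain_lemma {S : Type*} [Monoid S] (A A' B B' C C' : S)
    (ybe : C * B * A = A * (B * C))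
    (e1 : B * C * A' = A' * (C * B))
    (e2 : C' * A * B = B * (A * C'))
    (e3 : A' * B' * C' = C' * (B' * A')) :
    C * (C' * (A * (B * (B' * A')))) = A * (A' * (C * (B * (B' * C')))) := by
  have h2 : ∀ z, C' * (A * (B * z)) = B * (A * (C' * z)) := fun z => by
    rw [← mul_assoc, ← mul_assoc, e2, mul_assoc, mul_assoc]
  have hy : ∀ z, C * (B * (A * z)) = A * (B * (C * z)) := fun z => by
    rw [← mul_assoc, ← mul_assoc, ybe, mul_assoc, mul_assoc]
  have h1 : ∀ z, B * (C * (A' * z)) = A' * (C * (B * z)) := fun z => by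
    rw [← mul_assoc, ← mul_assoc, e1, mul_assoc, mul_assoc]
  have h3 : C' * (B' * A') = A' * (B' * C') := by rw [← e3, mul_assoc]
  rw [h2, h3, hy, h1]


end AuxDKM

set_option maxHeartbeats 2000000 in
/-- in a braided bialgebra `(H, R)` with an invertible central element `θ`
satisfying `Δ(θ) = (R · R₂₁)⁻¹ · (θ ⊗ θ)` and a character `f : H → k`, the element
`K = (f ⊗ id)((1 ⊗ θ⁻¹) · R · R₂₁)` satisfies
`Δ(K) = (K ⊗ 1) · R · (1 ⊗ K) · R₂₁` in `H ⊗ H`. -/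
theorem comul_of_K_dkm
    (R Rinv : H ⊗[k] H) (hR : IsUniversalRMatrix k H R Rinv)
    (θ θinv : H) (hθ : θ * θinv = 1) (hθ' : θinv * θ = 1)
    (hcentral : ∀ x : H, θ * x = x * θ)
    (hΔθ : Bialgebra.comulAlgHom k H θ
      = (tflip k H Rinv * Rinv) * (θ ⊗ₜ[k] θ))
    (f : H →ₐ[k] k)
    (K : H)
    (hKdef : K = dualTensorId k H f.toLinearMap (((1 : H) ⊗ₜ[k] θinv) * R * tflip k H R)) :
    Bialgebra.comulAlgHom k H K
      = (K ⊗ₜ[k] (1 : H)) * R * ((1 : H) ⊗ₜ[k] K) * tflip k H R := by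
  obtain ⟨hRi, hiR, hint, hhexL, hhexR⟩ := hR
  have hθc : ∀ x : H, θinv * x = x * θinv := by
    intro x
    have h1 : θinv * (θ * (x * θinv)) = x * θinv := by rw [← mul_assoc, hθ', one_mul]
    rw [← h1, ← mul_assoc θ x, hcentral x, mul_assoc x θ, hθ, mul_one]
  have hθθ : (θ ⊗ₜ[k] θ) * (θinv ⊗ₜ[k] θinv) = (1 : H ⊗[k] H) := by
    rw [Algebra.TensorProduct.tmul_mul_tmul, hθ, Algebra.TensorProduct.one_def]
  have hΔθinv : Bialgebra.comulAlgHom k H θinv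
      = (θinv ⊗ₜ[k] θinv) * (R * tflip k H R) := by
    have hba : Bialgebra.comulAlgHom k H θinv * Bialgebra.comulAlgHom k H θ = 1 := by
      rw [← map_mul, hθ', map_one]
    have hac : Bialgebra.comulAlgHom k H θ
        * ((θinv ⊗ₜ[k] θinv) * (R * tflip k H R)) = 1 := by
      rw [hΔθ, mul_assoc, ← mul_assoc (θ ⊗ₜ[k] θ), hθθ, one_mul, ← mul_assoc,
        mul_assoc (tflip k H Rinv), hiR, mul_one, ← map_mul, hiR, map_one]
    exact left_inv_eq_right_inv hba hac
  have hQ : ∀ w : H ⊗[k] (H ⊗[k] H),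
      ((1 : H) ⊗ₜ[k] ((1 : H) ⊗ₜ[k] θinv)) * w = w * ((1 : H) ⊗ₜ[k] ((1 : H) ⊗ₜ[k] θinv)) :=
    fun w => central_one_tmul ((1 : H) ⊗ₜ[k] θinv)
      (fun x => central_one_tmul θinv hθc x) w
  have swap : ∀ (w z : H ⊗[k] (H ⊗[k] H)),
      w * (((1 : H) ⊗ₜ[k] ((1 : H) ⊗ₜ[k] θinv)) * z)
        = ((1 : H) ⊗ₜ[k] ((1 : H) ⊗ₜ[k] θinv)) * (w * z) := fun w z => by
    rw [← mul_assoc, ← hQ w, mul_assoc]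
  have ybe : leg23 k H R * leg13 k H R * leg12 k H R
      = leg12 k H R * (leg13 k H R * leg23 k H R) := by
    have h := intertwine R hint R
    rw [hhexL] at h
    simp only [map_mul, tau12_leg23, tau12_leg13] at h
    exact h
  have e2 : leg23 k H (tflip k H R) * leg12 k H R * leg13 k H R
      = leg13 k H R * (leg12 k H R * leg23 k H (tflip k H R)) := by
    have h := congrArg (tau23 k H) ybe
    simp only [map_mul, tau23_leg12, tau23_leg13, tau23_leg23] at h
    exact h
  have e1 : leg13 k H R * leg23 k H R * leg12 k H (tflip k H R)
      = leg12 k H (tflip k H R) * (leg23 k H R * leg13 k H R) := by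
    have h := congrArg (tau12 k H) ybe
    simp only [map_mul, tau12_leg12, tau12_leg13, tau12_leg23] at h
    exact h
  have e3 : leg12 k H (tflip k H R) * leg13 k H (tflip k H R) * leg23 k H (tflip k H R)
      = leg23 k H (tflip k H R) * (leg13 k H (tflip k H R) * leg12 k H (tflip k H R)) := by
    have h := congrArg (tau12 k H) (congrArg (tau23 k H) e1)
    simp only [map_mul, tau23_leg12, tau23_leg13, tau23_leg23,
      tau12_leg12, tau12_leg13, tau12_leg23] at h
    exact h
  have hflipcr : comulRight k H (tflip k H R)
      = leg13 k H (tflip k H R) * leg12 k H (tflip k H R) := by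
    rw [← cyc_comulLeft, hhexL, map_mul, cyc_leg23, cyc_leg13]
  have c0 : comulRight k H ((1 : H) ⊗ₜ[k] θinv)
      = leg23 k H (Bialgebra.comulAlgHom k H θinv) := rfl
  have hPQsplit : leg23 k H (θinv ⊗ₜ[k] θinv)
      = ((1 : H) ⊗ₜ[k] (θinv ⊗ₜ[k] (1 : H))) * ((1 : H) ⊗ₜ[k] ((1 : H) ⊗ₜ[k] θinv)) := by
    simp [Algebra.TensorProduct.tmul_mul_tmul]
  have hu12 : leg12 k H (((1 : H) ⊗ₜ[k] θinv) * R * tflip k H R)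
      = ((1 : H) ⊗ₜ[k] (θinv ⊗ₜ[k] (1 : H))) * leg12 k H R * leg12 k H (tflip k H R) := by
    simp only [map_mul, leg12_tmul]
  have hu13 : leg13 k H (((1 : H) ⊗ₜ[k] θinv) * R * tflip k H R)
      = ((1 : H) ⊗ₜ[k] ((1 : H) ⊗ₜ[k] θinv)) * leg13 k H R * leg13 k H (tflip k H R) := by
    simp only [map_mul, leg13_tmul]
  have hL : comulRight k H (((1 : H) ⊗ₜ[k] θinv) * R * tflip k H R)
      = ((1 : H) ⊗ₜ[k] (θinv ⊗ₜ[k] (1 : H))) * ((1 : H) ⊗ₜ[k] ((1 : H) ⊗ₜ[k] θinv))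
        * leg23 k H R * leg23 k H (tflip k H R) * leg12 k H R * leg13 k H R
        * leg13 k H (tflip k H R) * leg12 k H (tflip k H R) := by
    simp only [map_mul]
    rw [c0, hΔθinv, hhexR, hflipcr]
    simp only [map_mul]
    rw [hPQsplit]
    simp only [mul_assoc]
  have main3 : comulRight k H (((1 : H) ⊗ₜ[k] θinv) * R * tflip k H R)
      = leg12 k H (((1 : H) ⊗ₜ[k] θinv) * R * tflip k H R)
        * (leg23 k H R
          * (leg13 k H (((1 : H) ⊗ₜ[k] θinv) * R * tflip k H R)
            * leg23 k H (tflip k H R))) := by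
    rw [hL, hu12, hu13]
    simp only [mul_assoc]
    rw [swap (leg23 k H R), swap (leg12 k H (tflip k H R)), swap (leg12 k H R),
      chain_lemma (leg12 k H R) (leg12 k H (tflip k H R)) (leg13 k H R)
        (leg13 k H (tflip k H R)) (leg23 k H R) (leg23 k H (tflip k H R)) ybe e1 e2 e3]
  have final : Bialgebra.comulAlgHom k H
      (dualTensorId k H f.toLinearMap (((1 : H) ⊗ₜ[k] θinv) * R * tflip k H R))
      = ((dualTensorId k H f.toLinearMap (((1 : H) ⊗ₜ[k] θinv) * R * tflip k H R)) ⊗ₜ[k] (1 : H))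
        * (R * (((1 : H) ⊗ₜ[k] (dualTensorId k H f.toLinearMap
            (((1 : H) ⊗ₜ[k] θinv) * R * tflip k H R))) * tflip k H R)) := by
    rw [← piMap_comulRight f, main3, map_mul (piMap k H f), map_mul (piMap k H f),
      map_mul (piMap k H f), piMap_leg12, piMap_leg13, piMap_leg23, piMap_leg23]
  rw [hKdef, final]
  simp only [mul_assoc]
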